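/- The integral ∫_0^1 (ln(1−t))³ / t dt equals −6·ζ(4) = −π⁴/15. -/

import Mathlib

open Real MeasureTheory Set

private lemma exp_neg_image' : (fun u : ℝ => Real.exp (-u)) '' Set.Ioi 0 = Set.Ioo 0 1 := by
  ext y
  constructor
  · rintro ⟨u, hu, rfl⟩
    exact ⟨Real.exp_pos _, Real.exp_lt_one_iff.mpr (by simpa using hu)⟩
  · rintro ⟨hy0, hy1⟩
    exact ⟨-Real.log y, by simpa using Real.log_neg hy0 hy1, by simp [Real.exp_log hy0]⟩

private lemma exp_neg_deriv' :
    ∀ x ∈ Set.Ioi (0:ℝ), HasDerivWithinAt (fun u : ℝ => Real.exp (-u))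
      (-Real.exp (-x)) (Set.Ioi 0) x := fun x _ =>
  (((Real.hasDerivAt_exp (-x)).comp x (hasDerivAt_neg x)).congr_deriv
    (mul_neg_one _)).hasDerivWithinAt

private lemma exp_neg_injOn' : Set.InjOn (fun u : ℝ => Real.exp (-u)) (Set.Ioi 0) :=
  fun _ _ _ _ h => neg_injective (Real.exp_injective h)

private lemma integrand_eq (n : ℕ) : ∀ x ∈ Set.Ioi (0:ℝ),
    |(-Real.exp (-x))| • ((-Real.log (Real.exp (-x))) ^ 3 * (Real.exp (-x)) ^ n)
      = x ^ 3 * Real.exp (-(((n:ℝ)+1) * x)) := by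
  intro x _
  rw [abs_neg, abs_of_pos (Real.exp_pos _), Real.log_exp, neg_neg, smul_eq_mul,
    ← Real.exp_nat_mul, mul_left_comm, ← Real.exp_add]
  congr 2
  ring

private lemma integrableOn_aux (n : ℕ) :
    IntegrableOn (fun x : ℝ => x ^ 3 * Real.exp (-(((n:ℝ)+1) * x))) (Set.Ioi 0) := by
  have h := integrableOn_rpow_mul_exp_neg_mul_rpow (p := 1) (s := 3) (b := (n:ℝ)+1)
    (by norm_num) (by norm_num) (by positivity)
  refine h.congr_fun (fun x hx => ?_) measurableSet_Ioi
  dsimp only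
  rw [Real.rpow_one, ← Real.rpow_natCast x 3]
  norm_num
  exact Or.inl (by ring)

private lemma integrableOn_term (n : ℕ) :
    IntegrableOn (fun t : ℝ => (-Real.log t) ^ 3 * t ^ n) (Set.Ioo 0 1) := by
  rw [← exp_neg_image', integrableOn_image_iff_integrableOn_abs_deriv_smul
    measurableSet_Ioi exp_neg_deriv' exp_neg_injOn']
  exact (integrableOn_aux n).congr_fun (fun x hx => (integrand_eq n x hx).symm)
    measurableSet_Ioi

private lemma integral_term (n : ℕ) :
    ∫ t in Set.Ioo (0:ℝ) 1, (-Real.log t) ^ 3 * t ^ n = 6 / ((n:ℝ)+1) ^ 4 := by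
  rw [← exp_neg_image', integral_image_eq_integral_abs_deriv_smul
    measurableSet_Ioi exp_neg_deriv' exp_neg_injOn']
  rw [setIntegral_congr_fun measurableSet_Ioi (integrand_eq n)]
  have hr : (0:ℝ) < (n:ℝ)+1 := by positivity
  have h := integral_rpow_mul_exp_neg_mul_Ioi (a := 4) (r := (n:ℝ)+1) (by norm_num) hr
  rw [setIntegral_congr_fun measurableSet_Ioi
    (fun x (hx : x ∈ Set.Ioi (0:ℝ)) => by
      rw [show (4:ℝ) - 1 = ((3:ℕ):ℝ) by norm_num, Real.rpow_natCast])] at h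
  rw [h]
  have hg : Real.Gamma 4 = 6 := by
    rw [show (4:ℝ) = (3:ℕ) + 1 by norm_num, Real.Gamma_nat_eq_factorial]
    norm_num [Nat.factorial]
  rw [hg, show (4:ℝ) = ((4:ℕ):ℝ) by norm_num, Real.rpow_natCast]
  field_simp

private lemma hasSum_six : HasSum (fun n : ℕ => 6 / ((n:ℝ)+1) ^ 4) (π ^ 4 / 15) := by
  have h4 := hasSum_zeta_four
  have hshift : HasSum (fun n : ℕ => (1:ℝ) / ((n:ℝ)+1) ^ 4) (π ^ 4 / 90) := by
    have := (hasSum_nat_add_iff (f := fun n : ℕ => (1:ℝ) / (n:ℝ) ^ 4) 1).mpr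
      (by simpa using h4)
    simpa using this
  have h6 := hshift.mul_left 6
  have heq : (fun n : ℕ => 6 / ((n:ℝ)+1) ^ 4) = fun n : ℕ => 6 * (1 / ((n:ℝ)+1) ^ 4) := by
    funext n; ring
  rw [heq, show π ^ 4 / 15 = 6 * (π ^ 4 / 90) by ring]
  exact h6

theorem integral_log_one_sub_cube_div :
    ∫ t in Set.Ioo (0 : ℝ) 1, (Real.log (1 - t)) ^ 3 / t =
      -(Real.pi ^ 4 / 15) := by
  have step1 : ∫ t in Set.Ioo (0 : ℝ) 1, (Real.log (1 - t)) ^ 3 / t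
      = ∫ u in Set.Ioo (0:ℝ) 1, (Real.log u) ^ 3 / (1 - u) := by
    rw [← integral_Ioc_eq_integral_Ioo, ← integral_Ioc_eq_integral_Ioo,
      ← intervalIntegral.integral_of_le (by norm_num : (0:ℝ) ≤ 1),
      ← intervalIntegral.integral_of_le (by norm_num : (0:ℝ) ≤ 1)]
    have := intervalIntegral.integral_comp_sub_left (a := 0) (b := 1)
      (fun u : ℝ => (Real.log u) ^ 3 / (1 - u)) 1
    simp only [sub_self, sub_zero] at this
    rw [← this]
    congr 1
    ext t
    rw [sub_sub_cancel]
  rw [step1]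
  have step2 : ∫ u in Set.Ioo (0:ℝ) 1, (Real.log u) ^ 3 / (1 - u)
      = ∫ u in Set.Ioo (0:ℝ) 1, -(∑' n : ℕ, (-Real.log u) ^ 3 * u ^ n) := by
    refine setIntegral_congr_fun measurableSet_Ioo (fun u hu => ?_)
    rw [tsum_mul_left, tsum_geometric_of_lt_one hu.1.le hu.2]
    have : (-Real.log u) ^ 3 = -(Real.log u) ^ 3 := by ring
    rw [this]
    field_simp
  rw [step2, integral_neg]
  have hmeas : ∀ n : ℕ, AEStronglyMeasurable (fun t : ℝ => (-Real.log t) ^ 3 * t ^ n)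
      (volume.restrict (Set.Ioo 0 1)) := by
    intro n
    exact (((Real.measurable_log.neg.pow_const 3).mul (measurable_pow.comp
      (measurable_id.prodMk measurable_const))).aestronglyMeasurable)
  have hlint : ∀ n : ℕ, ∫⁻ t in Set.Ioo (0:ℝ) 1, ‖(-Real.log t) ^ 3 * t ^ n‖ₑ
      = ENNReal.ofReal (6 / ((n:ℝ)+1) ^ 4) := by
    intro n
    have hnn : (0:ℝ → ℝ) ≤ᵐ[volume.restrict (Set.Ioo 0 1)]
        (fun t => (-Real.log t) ^ 3 * t ^ n) := by
      filter_upwards [ae_restrict_mem measurableSet_Ioo] with t ht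
      have h1 : 0 < -Real.log t := by simpa using Real.log_neg ht.1 ht.2
      have h2 : 0 < t := ht.1
      positivity
    rw [← integral_term n, ofReal_integral_eq_lintegral_ofReal (integrableOn_term n) hnn]
    refine lintegral_congr_ae ?_
    filter_upwards [hnn] with t ht
    rw [← ofReal_norm_eq_enorm, Real.norm_eq_abs, abs_of_nonneg ht]
  have hsum := hasSum_six
  have hswap : ∫ t in Set.Ioo (0:ℝ) 1, ∑' n : ℕ, (-Real.log t) ^ 3 * t ^ n
      = ∑' n : ℕ, ∫ t in Set.Ioo (0:ℝ) 1, (-Real.log t) ^ 3 * t ^ n := by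
    refine integral_tsum hmeas ?_
    rw [funext hlint |> congrArg tsum]
    rw [← ENNReal.ofReal_tsum_of_nonneg (fun n => by positivity) hsum.summable]
    exact ENNReal.ofReal_ne_top
  rw [hswap]
  have : ∑' n : ℕ, ∫ t in Set.Ioo (0:ℝ) 1, (-Real.log t) ^ 3 * t ^ n = π ^ 4 / 15 := by
    rw [funext integral_term |> congrArg tsum]
    exact hsum.tsum_eq
  rw [this]
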